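/- Let m, k ≥ 1, let v : ℝᵐ → ℝᵐ be continuous, let f : ℝᵐ → ℝᵏ be C¹ and let g : ℝᵐ → (k × k real matrices) be continuous, and suppose that for every x ∈ ℝᵐ the derivative of f at x applied to v(x) equals g(x) · f(x) (matrix–vector product). Let γ : ℝ → ℝᵐ be differentiable with γ'(t) = v(γ(t)) for all t. If f(γ(0)) = 0 then f(γ(t)) = 0 for all t ∈ ℝ. -/

import Mathlib

open Set

/-- If `Df(x)(v(x)) = g(x)·f(x)` for all `x` (the components of `f` are differentiated
along `v` into the ideal they generate), and `γ` is an integral curve of `v` with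
`f(γ(0)) = 0`, then `f(γ(t)) = 0` for all `t`. -/
theorem zero_set_invariant (m k : ℕ) (hm : 1 ≤ m) (hk : 1 ≤ k)
    (v : (Fin m → ℝ) → (Fin m → ℝ)) (hv : Continuous v)
    (f : (Fin m → ℝ) → (Fin k → ℝ)) (hf : ContDiff ℝ 1 f)
    (g : (Fin m → ℝ) → Matrix (Fin k) (Fin k) ℝ) (hg : Continuous g)
    (hrel : ∀ x, fderiv ℝ f x (v x) = Matrix.mulVec (g x) (f x))
    (γ : ℝ → (Fin m → ℝ)) (hγ : ∀ t, HasDerivAt γ (v (γ t)) t)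
    (h0 : f (γ 0) = 0) :
    ∀ t : ℝ, f (γ t) = 0 := by
  intro t
  -- Bundle matrix multiplication as a continuous linear map, linearly in the matrix.
  set Φ : Matrix (Fin k) (Fin k) ℝ →ₗ[ℝ] (Fin k → ℝ) →L[ℝ] (Fin k → ℝ) :=
    (LinearMap.toContinuousLinearMap.toLinearMap.comp Matrix.toLin'.toLinearMap) with hΦ
  have hΦcont : Continuous Φ := Φ.continuous_of_finiteDimensional
  have hΦapply : ∀ (M : Matrix (Fin k) (Fin k) ℝ) (y : Fin k → ℝ),
      Φ M y = M.mulVec y := fun M y => rfl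
  set a : ℝ := -(|t| + 1) with ha
  set b : ℝ := |t| + 1 with hb
  have habs := abs_nonneg t
  have hab : a ≤ b := by rw [ha, hb]; linarith
  have hγcont : Continuous γ :=
    continuous_iff_continuousAt.mpr fun s => (hγ s).continuousAt
  -- the matrix-valued curve, clamped to [a, b]
  set L : ℝ → (Fin k → ℝ) →L[ℝ] (Fin k → ℝ) :=
    fun s => Φ (g (γ (projIcc a b hab s))) with hL
  have hLcont : Continuous L := by
    exact hΦcont.comp (hg.comp (hγcont.comp (continuous_subtype_val.comp
      (continuous_projIcc))))
  -- a uniform bound on the norms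
  obtain ⟨C, hC⟩ : ∃ C, ∀ s : ℝ, ‖L s‖ ≤ C := by
    obtain ⟨C, hC⟩ := (isCompact_Icc (a := a) (b := b)).exists_bound_of_continuousOn
      (hLcont.continuousOn (s := Icc a b))
    exact ⟨C, fun s => by
      have : L s = L (projIcc a b hab s) := by
        rw [hL]; simp [projIcc_val]
      rw [this]; exact hC _ (projIcc a b hab s).2⟩
  set K : NNReal := C.toNNReal with hK
  have hlip : ∀ s : ℝ, LipschitzWith K (fun y => L s y) := by
    intro s
    refine ((L s).lipschitz).weaken ?_
    rw [hK, ← norm_toNNReal]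
    exact Real.toNNReal_mono (hC s)
  -- the curve y(s) = f (γ s) solves y' = L s y
  have hfd : Differentiable ℝ f := hf.differentiable one_ne_zero
  have hderiv : ∀ s : ℝ, HasDerivAt (fun u => f (γ u)) ((g (γ s)).mulVec (f (γ s))) s := by
    intro s
    have := (hfd (γ s)).hasFDerivAt.comp_hasDerivAt s (hγ s)
    rwa [hrel (γ s)] at this
  have ht : t ∈ Icc a b := by
    have h1 := neg_abs_le t
    have h2 := le_abs_self t
    exact ⟨by rw [ha]; simp only [hb]; linarith, by rw [hb]; linarith⟩
  have h0mem : (0 : ℝ) ∈ Ioo a b := by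
    constructor
    · rw [ha]; simp only [hb]; linarith
    · rw [hb]; linarith
  have hLeq : ∀ s ∈ Icc a b, (fun y => L s y) (f (γ s)) = (g (γ s)).mulVec (f (γ s)) := by
    intro s hs
    simp only [hL, projIcc_of_mem hab hs, hΦapply]
  have key : EqOn (fun s => f (γ s)) (fun _ : ℝ => (0 : Fin k → ℝ)) (Icc a b) := by
    apply ODE_solution_unique_of_mem_Icc (v := fun s y => L s y) (s := fun _ => univ)
      (K := K) (t₀ := 0) (fun s _ => (hlip s).lipschitzOnWith (s := univ)) h0mem
    · exact ((hf.continuous.comp hγcont).continuousOn)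
    · intro s hs
      have := hderiv s
      rwa [← hLeq s (Ioo_subset_Icc_self hs)] at this
    · intro s _; trivial
    · exact continuousOn_const
    · intro s _
      have h : L s (0 : Fin k → ℝ) = 0 := (L s).map_zero
      simpa [h] using hasDerivAt_const s (0 : Fin k → ℝ)
    · intro s _; trivial
    · exact h0
  exact key ht
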